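/- Let V be a finite nonempty set, N ≥ 1, and F : V^N → ℝ. Let ν : ℕ → {1,…,N} be a schedule for which there exists B ∈ ℕ such that for every coordinate i and every n there is k with n ≤ k ≤ n + B and ν(k) = i. Let (η_n)_{n≥0} be a sequence in V^N evolving by asynchronous coordinate descent: η_{n+1} agrees with η_n in every coordinate except possibly coordinate ν(n); if F(η_n) ≤ F(η_n[ν(n) := v]) for all v ∈ V then η_{n+1} = η_n; otherwise η_{n+1} = η_n[ν(n) := v*] for some v* minimizing v ↦ F(η_n[ν(n) := v]) over V. Then there exist n' ∈ ℕ and η̄ ∈ V^N such that η_n = η̄ for all n ≥ n', and η̄ is a coordinate-wise minimum of F, i.e., F(η̄) ≤ F(η̄[i := v]) for every coordinate i ∈ {1,…,N} and every v ∈ V. -/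
import Mathlib


/-- Asynchronous coordinate descent of a function `F : V^N → ℝ` over a finite set
`V`, driven by a schedule `ν` with bounded gaps, converges in finite time to a configuration
`ηbar` that is a coordinate-wise minimum of `F`. -/
theorem asynchronous_coordinate_descent_convergence
    {V : Type*} [Fintype V] [Nonempty V] (N : ℕ) (hN : 1 ≤ N)
    (F : (Fin N → V) → ℝ) (ν : ℕ → Fin N) (B : ℕ)
    (hν : ∀ (i : Fin N) (n : ℕ), ∃ k : ℕ, n ≤ k ∧ k ≤ n + B ∧ ν k = i)
    (η : ℕ → Fin N → V)
    (hstay : ∀ (n : ℕ) (i : Fin N), i ≠ ν n → η (n + 1) i = η n i)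
    (hnomove : ∀ n : ℕ,
      (∀ v : V, F (η n) ≤ F (Function.update (η n) (ν n) v)) → η (n + 1) = η n)
    (hmove : ∀ n : ℕ,
      ¬ (∀ v : V, F (η n) ≤ F (Function.update (η n) (ν n) v)) →
      ∃ vstar : V,
        (∀ v : V, F (Function.update (η n) (ν n) vstar) ≤ F (Function.update (η n) (ν n) v)) ∧
        η (n + 1) = Function.update (η n) (ν n) vstar) :
    ∃ (n' : ℕ) (ηbar : Fin N → V), (∀ n ≥ n', η n = ηbar) ∧
      ∀ (i : Fin N) (v : V), F ηbar ≤ F (Function.update ηbar i v) := by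
  -- F (η n) is nonincreasing
  have hmono : ∀ n, F (η (n + 1)) ≤ F (η n) := by
    intro n
    by_cases h : ∀ v : V, F (η n) ≤ F (Function.update (η n) (ν n) v)
    · rw [hnomove n h]
    · obtain ⟨vstar, hv, heq⟩ := hmove n h
      rw [heq]
      simpa [Function.update_eq_self] using hv (η n (ν n))
  have hanti : Antitone (fun n => F (η n)) := antitone_nat_of_succ_le hmono
  -- the range of n ↦ F (η n) is finite
  have hfin : (Set.range fun n => F (η n)).Finite :=
    Set.Finite.subset (Set.finite_range F) (by rintro _ ⟨n, rfl⟩; exact ⟨η n, rfl⟩)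
  obtain ⟨b, ⟨n0, rfl⟩, hminb⟩ :=
    Set.exists_min_image _ id hfin ⟨F (η 0), 0, rfl⟩
  -- F (η n) is constant for n ≥ n0
  have hconst : ∀ n ≥ n0, F (η n) = F (η n0) := fun n hn =>
    le_antisymm (hanti hn) (hminb _ ⟨n, rfl⟩)
  -- hence η is constant for n ≥ n0
  have hstep : ∀ n ≥ n0, η (n + 1) = η n := by
    intro n hn
    by_cases h : ∀ v : V, F (η n) ≤ F (Function.update (η n) (ν n) v)
    · exact hnomove n h
    · exfalso
      push_neg at h
      obtain ⟨v, hv⟩ := h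
      obtain ⟨vstar, hvs, heq⟩ := hmove n (by push_neg; exact ⟨v, hv⟩)
      have h1 : F (η (n + 1)) < F (η n) := by
        rw [heq]; exact lt_of_le_of_lt (hvs v) hv
      have h2 : F (η (n + 1)) = F (η n) := by
        rw [hconst (n + 1) (le_trans hn (Nat.le_succ n)), hconst n hn]
      linarith
  have hstab : ∀ n ≥ n0, η n = η n0 := by
    intro n hn
    induction n, hn using Nat.le_induction with
    | base => rfl
    | succ n hn ih => rw [hstep n hn, ih]
  refine ⟨n0, η n0, hstab, ?_⟩
  intro i v
  obtain ⟨k, hk1, _, hk3⟩ := hν i n0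
  have hek : η k = η n0 := hstab k hk1
  by_cases h : ∀ w : V, F (η k) ≤ F (Function.update (η k) (ν k) w)
  · have := h v
    rwa [hek, hk3] at this
  · exfalso
    push_neg at h
    obtain ⟨w, hw⟩ := h
    obtain ⟨vstar, hvs, heq⟩ := hmove k (by push_neg; exact ⟨w, hw⟩)
    have h1 : F (η (k + 1)) < F (η k) := by
      rw [heq]; exact lt_of_le_of_lt (hvs w) hw
    have h2 : η (k + 1) = η k := hstep k hk1
    rw [h2] at h1
    exact lt_irrefl _ h1
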